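/- Let k ≥ 1 and m ≥ 2 be integers, let d = km, let X = {e_1, …, e_d} be the set of standard basis vectors of ℝ^d, and let C_1,…,C_k be any partition of X into clusters of exactly m points each, with means μ_1,…,μ_k. Then for every i ∈ [k] and every x ∈ C_i: ‖x − μ_i‖² = 1 − 1/m and ‖x − μ_j‖² = 1 + 1/m for every j ≠ i. Consequently, for every α with 1 < α < √((m + 1)/(m − 1)), every such partition satisfies α-center proximity. -/

import Mathlib

/-- Core computation for the exponential lower bound on the number of optimal α-center-proximal
balanced clusterings: any partition of the `d = k·m` standard basis vectors of `ℝ^d` into `k`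
clusters of exactly `m` points each satisfies `‖x − μ i‖² = 1 − 1/m` for `x ∈ C i` and
`‖x − μ j‖² = 1 + 1/m` for `j ≠ i`, and hence is α-center proximal for every
`1 < α < √((m + 1)/(m − 1))`. -/
theorem basis_partition_center_proximal
    (k m d : ℕ) (hk : 1 ≤ k) (hm : 2 ≤ m) (hd : d = k * m)
    (C : Fin k → Finset (EuclideanSpace ℝ (Fin d)))
    (hdisj : ∀ i j, i ≠ j → Disjoint (C i) (C j))
    (hcover : ∀ x, (∃ i, x ∈ C i) ↔ ∃ s : Fin d, x = EuclideanSpace.single s (1 : ℝ))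
    (hcard : ∀ i, (C i).card = m)
    (μ : Fin k → EuclideanSpace ℝ (Fin d))
    (hμ : ∀ i, μ i = ((C i).card : ℝ)⁻¹ • ∑ x ∈ C i, x) :
    (∀ i, ∀ x ∈ C i, ‖x - μ i‖ ^ 2 = 1 - 1 / (m : ℝ) ∧
      ∀ j, j ≠ i → ‖x - μ j‖ ^ 2 = 1 + 1 / (m : ℝ)) ∧
    (∀ α : ℝ, 1 < α → α < Real.sqrt (((m : ℝ) + 1) / ((m : ℝ) - 1)) →
      ∀ i j, i ≠ j → ∀ x ∈ C i, α * ‖x - μ i‖ < ‖x - μ j‖) := by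
  classical
  have hm0 : (0:ℝ) < m := by positivity
  have hmne : (m:ℝ) ≠ 0 := ne_of_gt hm0
  have hbas : ∀ i, ∀ x ∈ C i, ∃ s, x = EuclideanSpace.single s (1:ℝ) :=
    fun i x hx => (hcover x).1 ⟨i, hx⟩
  -- inner product of two basis vectors
  have hinner : ∀ x y : EuclideanSpace ℝ (Fin d),
      (∃ s, x = EuclideanSpace.single s (1:ℝ)) →
      (∃ t, y = EuclideanSpace.single t (1:ℝ)) →
      (inner ℝ x y : ℝ) = if x = y then 1 else 0 := by
    rintro x y ⟨s, rfl⟩ ⟨t, rfl⟩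
    rw [EuclideanSpace.inner_single_left]
    simp only [map_one, one_mul, EuclideanSpace.single_apply]
    by_cases h : s = t
    · subst h; simp
    · have hne : EuclideanSpace.single s (1:ℝ) ≠ EuclideanSpace.single t 1 := by
        intro he
        have h2 := congrFun (congrArg (fun v : EuclideanSpace ℝ (Fin d) => (v : Fin d → ℝ)) he) s
        simp only [EuclideanSpace.single_apply, if_pos rfl, if_neg h] at h2
        exact one_ne_zero h2
      rw [if_neg h, if_neg hne]
  have hnorm1 : ∀ x : EuclideanSpace ℝ (Fin d),
      (∃ s, x = EuclideanSpace.single s (1:ℝ)) → ‖x‖ = 1 := by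
    rintro x ⟨s, rfl⟩
    simp [EuclideanSpace.norm_single]
  -- inner x (μ i)
  have hxmu : ∀ (x : EuclideanSpace ℝ (Fin d)),
      (∃ s, x = EuclideanSpace.single s (1:ℝ)) → ∀ i,
      (inner ℝ x (μ i) : ℝ) = if x ∈ C i then (m:ℝ)⁻¹ else 0 := by
    intro x hx i
    rw [hμ i, hcard i, real_inner_smul_right, inner_sum]
    have : ∑ y ∈ C i, (inner ℝ x y : ℝ) = if x ∈ C i then 1 else 0 := by
      rw [Finset.sum_congr rfl (fun y hy => hinner x y hx (hbas i y hy))]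
      exact Finset.sum_ite_eq (C i) x (fun _ => (1:ℝ))
    rw [this]
    split <;> simp
  -- norm of μ i squared
  have hmu2 : ∀ i, ‖μ i‖ ^ 2 = (m:ℝ)⁻¹ := by
    intro i
    have h1 : (inner ℝ (μ i) (μ i) : ℝ) = (m:ℝ)⁻¹ * ∑ y ∈ C i, (inner ℝ y (μ i) : ℝ) := by
      nth_rewrite 1 [hμ i]
      rw [hcard i, real_inner_smul_left, sum_inner]
    have h2 : ∑ y ∈ C i, (inner ℝ y (μ i) : ℝ) = (m:ℝ) * (m:ℝ)⁻¹ := by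
      rw [Finset.sum_congr rfl (fun y hy => by
        rw [hxmu y (hbas i y hy) i, if_pos hy])]
      rw [Finset.sum_const, hcard i, nsmul_eq_mul]
    rw [← real_inner_self_eq_norm_sq, h1, h2]
    field_simp
  have key : ∀ i, ∀ x ∈ C i, ‖x - μ i‖ ^ 2 = 1 - 1 / (m : ℝ) ∧
      ∀ j, j ≠ i → ‖x - μ j‖ ^ 2 = 1 + 1 / (m : ℝ) := by
    intro i x hx
    have hxb := hbas i x hx
    have hx1 := hnorm1 x hxb
    constructor
    · rw [norm_sub_sq_real, hx1, hxmu x hxb i, if_pos hx, hmu2 i]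
      field_simp
      ring
    · intro j hji
      have hxnj : x ∉ C j := fun hxj =>
        (hdisj j i hji).forall_ne_finset hxj hx rfl
      rw [norm_sub_sq_real, hx1, hxmu x hxb j, if_neg hxnj, hmu2 j]
      field_simp
      ring
  refine ⟨key, ?_⟩
  intro α hα1 hα2 i j hij x hx
  obtain ⟨h1, h2⟩ := key i x hx
  have h2' := h2 j (Ne.symm hij)
  have hα0 : 0 < α := lt_trans one_pos hα1
  have hsq : α ^ 2 < ((m : ℝ) + 1) / ((m : ℝ) - 1) :=
    (Real.lt_sqrt hα0.le).mp hα2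
  have hm2 : (2:ℝ) ≤ m := by exact_mod_cast hm
  have hm1 : (0:ℝ) < (m:ℝ) - 1 := by linarith
  have hfac : (0:ℝ) < 1 - 1 / (m:ℝ) := by
    rw [sub_pos, div_lt_one hm0]; linarith
  apply lt_of_pow_lt_pow_left₀ 2 (norm_nonneg _)
  rw [mul_pow, h1, h2']
  have heq : (((m : ℝ) + 1) / ((m : ℝ) - 1)) * (1 - 1 / m) = 1 + 1 / m := by
    field_simp
  calc α ^ 2 * (1 - 1 / (m:ℝ)) < (((m : ℝ) + 1) / ((m : ℝ) - 1)) * (1 - 1 / m) :=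
        mul_lt_mul_of_pos_right hsq hfac
    _ = 1 + 1 / m := heq
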